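/- Let V ∈ ℝ^{2n×2r} be a symplectic matrix with symplectic inverse V⁺ = J₂ᵣᵀVᵀJ₂ₙ, let y_ref ∈ ℝ^{2n}, and let H : ℝ^{2n} → ℝ be C¹. Define the reduced Hamiltonian H̃(ỹ) := H(y_ref + Vỹ). Then V⁺ J₂ₙ ∇H(y_ref + Vỹ) = J₂ᵣ ∇H̃(ỹ) for all ỹ ∈ ℝ^{2r}. -/

import Mathlib

open Matrix

/-- The canonical symplectic matrix `J₂ₙ = [[0, Iₙ], [-Iₙ, 0]]`. -/
noncomputable def symplJ (n : ℕ) : Matrix (Fin n ⊕ Fin n) (Fin n ⊕ Fin n) ℝ :=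
  Matrix.fromBlocks 0 1 (-1) 0

/-- Gradient of a scalar function on a finite pi space over ℝ. -/
noncomputable def grad {ι : Type*} [Fintype ι] [DecidableEq ι]
    (H : (ι → ℝ) → ℝ) (y : ι → ℝ) : ι → ℝ :=
  fun i => fderiv ℝ H y (Pi.single i 1)

lemma symplJ_mul_self (n : ℕ) : symplJ n * symplJ n = -1 := by
  ext i j
  cases i <;> cases j <;>
    simp [symplJ, Matrix.fromBlocks_multiply, Matrix.one_apply, Sum.inl.injEq, Sum.inr.injEq]

lemma symplJ_transpose (n : ℕ) : (symplJ n)ᵀ = -symplJ n := by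
  ext i j
  cases i <;> cases j <;> simp [symplJ, Matrix.fromBlocks_transpose, Matrix.one_apply, eq_comm]

lemma grad_comp (n r : ℕ)
    (V : Matrix (Fin n ⊕ Fin n) (Fin r ⊕ Fin r) ℝ)
    (yref : Fin n ⊕ Fin n → ℝ)
    (H : (Fin n ⊕ Fin n → ℝ) → ℝ) (hH : ContDiff ℝ 1 H)
    (yr : Fin r ⊕ Fin r → ℝ) :
    grad (fun w => H (yref + V *ᵥ w)) yr = Vᵀ *ᵥ grad H (yref + V *ᵥ yr) := by
  set y := yref + V *ᵥ yr with hy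
  have hd : DifferentiableAt ℝ H y := (hH.differentiable one_ne_zero).differentiableAt
  set L := (Matrix.mulVecLin V).toContinuousLinearMap with hL
  have hg : HasFDerivAt (fun w => yref + V *ᵥ w) L yr := by
    have : HasFDerivAt (fun w => yref + L w) ((0 : _) + L) yr :=
      (hasFDerivAt_const yref yr).add L.hasFDerivAt
    simpa [hL, Matrix.mulVecLin_apply] using this
  have hcomp : HasFDerivAt (fun w => H (yref + V *ᵥ w))
      ((fderiv ℝ H y).comp L) yr := by
    exact (hd.hasFDerivAt.comp yr (by simpa [hy] using hg))
  funext i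
  have hfd := hcomp.fderiv
  simp only [grad, hfd, ContinuousLinearMap.coe_comp', Function.comp_apply]
  have hLsing : L (Pi.single i 1) = fun j => V j i := by
    funext j
    simp [hL, Matrix.mulVecLin_apply, Matrix.mulVec_single]
  rw [hLsing]
  have hexp : (fun j => V j i) = ∑ j, Pi.single j (V j i) := by
    funext k
    simp [Finset.sum_apply, Pi.single_apply]
  rw [hexp, map_sum]
  have : ∀ j, fderiv ℝ H y (Pi.single j (V j i)) = V j i * grad H y j := by
    intro j
    have : Pi.single j (V j i) = V j i • (Pi.single j 1 : (Fin n ⊕ Fin n) → ℝ) := by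
      funext k
      simp [Pi.single_apply, mul_comm]
    rw [this, _root_.map_smul]
    simp [grad, smul_eq_mul]
  simp only [this]
  simp [Matrix.mulVec, dotProduct, Matrix.transpose_apply]

theorem symplectic_galerkin_reduced_hamiltonian (n r : ℕ)
    (V : Matrix (Fin n ⊕ Fin n) (Fin r ⊕ Fin r) ℝ)
    (hV : Vᵀ * symplJ n * V = symplJ r)
    (yref : Fin n ⊕ Fin n → ℝ)
    (H : (Fin n ⊕ Fin n → ℝ) → ℝ) (hH : ContDiff ℝ 1 H)
    (yr : Fin r ⊕ Fin r → ℝ) :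
    ((symplJ r)ᵀ * Vᵀ * symplJ n) *ᵥ (symplJ n *ᵥ grad H (yref + V *ᵥ yr)) =
      symplJ r *ᵥ grad (fun w => H (yref + V *ᵥ w)) yr := by
  rw [grad_comp n r V yref H hH yr, Matrix.mulVec_mulVec, Matrix.mulVec_mulVec]
  congr 1
  rw [Matrix.mul_assoc, symplJ_mul_self, symplJ_transpose]
  simp [Matrix.mul_assoc]
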